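/- Let δ, κ, λ > 0 and μ ≥ 0 with δλ − κ > 0, and suppose (κ + δμ)/(δ(δλ − κ)) = δ²/(4κ²). Define u : ℝ → ℝ by u(x) = (κ/δ)x² + (κ + δμ)/δ² for |x| ≤ δ/(2κ) and u(x) = |x| − δ/(2κ) + λδ²/(4κ²) for |x| > δ/(2κ). Then u is continuously differentiable on ℝ, |u'(x)| ≤ 1 for all x ∈ ℝ, (1/2)u''(x) − δu(x) + κx² + μ = 0 for all x with |x| < δ/(2κ), u(x) ≥ λx² for all |x| ≤ δ/(2κ), and u(x) ≤ λx² for all |x| ≥ δ/(2κ). -/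

import Mathlib

lemma sqPosPart_hasDerivAt (t : ℝ) :
    HasDerivAt (fun s : ℝ => (max s 0)^2) (2 * max t 0) t := by
  rcases lt_trichotomy t 0 with ht | ht | ht
  · have h0 : (fun s : ℝ => (max s 0)^2) =ᶠ[nhds t] (fun _ => (0:ℝ)) := by
      filter_upwards [Iio_mem_nhds ht] with s hs
      have : s ≤ 0 := le_of_lt hs
      simp [max_eq_right this]
    rw [show 2 * max t 0 = 0 by simp [max_eq_right ht.le]]
    exact (hasDerivAt_const t 0).congr_of_eventuallyEq h0
  · subst ht
    rw [hasDerivAt_iff_tendsto_slope]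
    simp only [max_self, mul_zero]
    apply squeeze_zero_norm' _ (tendsto_norm_zero.mono_left nhdsWithin_le_nhds)
    filter_upwards [self_mem_nhdsWithin] with y hy
    have hy0 : y ≠ 0 := hy
    rw [slope_def_field]
    rcases le_or_gt y 0 with h1 | h1
    · rw [max_eq_right h1]
      simp
    · rw [max_eq_left h1.le]
      simp only [max_self, ne_eq, OfNat.ofNat_ne_zero, not_false_eq_true, zero_pow, sub_zero]
      rw [show y^2 / y = y by field_simp]
  · have h0 : (fun s : ℝ => (max s 0)^2) =ᶠ[nhds t] (fun s => s^2) := by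
      filter_upwards [Ioi_mem_nhds ht] with s hs
      have : (0:ℝ) ≤ s := le_of_lt hs
      simp [max_eq_left this]
    rw [show 2 * max t 0 = 2 * t by simp [max_eq_left ht.le]]
    have h2 := hasDerivAt_pow 2 t
    norm_num at h2
    exact h2.congr_of_eventuallyEq h0

set_option maxHeartbeats 1600000

/-- The boundary case: if `(κ + δμ)/(δ(δλ − κ)) = δ²/(4κ²)`, the function `u` defined by
`u(x) = (κ/δ)x² + (κ + δμ)/δ²` for `|x| ≤ δ/(2κ)` and
`u(x) = |x| − δ/(2κ) + λδ²/(4κ²)` for `|x| > δ/(2κ)` is `C¹` on `ℝ`, satisfies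
`|u'| ≤ 1` everywhere, solves `(1/2)u'' − δu + κx² + μ = 0` for `|x| < δ/(2κ)`,
and satisfies `u ≥ λx²` for `|x| ≤ δ/(2κ)` and `u ≤ λx²` for `|x| ≥ δ/(2κ)`. -/
theorem statement14 (δ κ lam μ : ℝ) (hδ : 0 < δ) (hκ : 0 < κ) (hlam : 0 < lam)
    (hμ : 0 ≤ μ) (h : 0 < δ*lam - κ)
    (hbd : (κ + δ*μ)/(δ*(δ*lam - κ)) = δ^2/(4*κ^2))
    (u : ℝ → ℝ)
    (hu : ∀ x : ℝ, u x =
      if |x| ≤ δ/(2*κ) then (κ/δ) * x^2 + (κ + δ*μ)/δ^2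
      else |x| - δ/(2*κ) + lam*δ^2/(4*κ^2)) :
    ContDiff ℝ 1 u ∧
    (∀ x : ℝ, |deriv u x| ≤ 1) ∧
    (∀ x : ℝ, |x| < δ/(2*κ) → (1/2) * deriv (deriv u) x - δ * u x + κ * x^2 + μ = 0) ∧
    (∀ x : ℝ, |x| ≤ δ/(2*κ) → lam * x^2 ≤ u x) ∧
    (∀ x : ℝ, δ/(2*κ) ≤ |x| → u x ≤ lam * x^2) := by
  have hδ' : δ ≠ 0 := ne_of_gt hδ
  have hκ' : κ ≠ 0 := ne_of_gt hκ
  have hlk : δ*lam - κ ≠ 0 := ne_of_gt h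
  have hb : 0 < δ/(2*κ) := by positivity
  have key : 4*κ^2*(κ + δ*μ) = δ^3*(δ*lam - κ) := by
    field_simp at hbd
    linarith
  have hC : (κ + δ*μ)/δ^2 = lam*δ^2/(4*κ^2) - δ/(4*κ) := by
    field_simp
    linear_combination key
  -- global smooth representation of u
  have huv : ∀ x : ℝ, u x = (κ/δ)*x^2 + (κ + δ*μ)/δ^2
      - (κ/δ)*((max (x - δ/(2*κ)) 0)^2 + (max (-x - δ/(2*κ)) 0)^2) := by
    intro x
    rw [hu x]
    split_ifs with hx
    · obtain ⟨h1, h2⟩ := abs_le.mp hx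
      rw [max_eq_right (by linarith), max_eq_right (by linarith)]
      ring
    · push_neg at hx
      rcases le_or_gt 0 x with hx0 | hx0
      · rw [abs_of_nonneg hx0] at hx ⊢
        rw [max_eq_left (by linarith), max_eq_right (by linarith), hC]
        field_simp
        ring
      · rw [abs_of_neg hx0] at hx ⊢
        rw [max_eq_right (by linarith), max_eq_left (by linarith), hC]
        field_simp
        ring
  have hder : ∀ x : ℝ, HasDerivAt u
      ((2*κ/δ) * (x - max (x - δ/(2*κ)) 0 + max (-x - δ/(2*κ)) 0)) x := by
    intro x
    have h1 : HasDerivAt (fun y : ℝ => (max (y - δ/(2*κ)) 0)^2)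
        (2 * max (x - δ/(2*κ)) 0) x := by
      have := (sqPosPart_hasDerivAt (x - δ/(2*κ))).comp x
        ((hasDerivAt_id x).sub_const (δ/(2*κ)))
      simpa [Function.comp_def] using this
    have h2 : HasDerivAt (fun y : ℝ => (max (-y - δ/(2*κ)) 0)^2)
        (2 * max (-x - δ/(2*κ)) 0 * (-1)) x := by
      have := (sqPosPart_hasDerivAt (-x - δ/(2*κ))).comp x
        (((hasDerivAt_id x).neg).sub_const (δ/(2*κ)))
      simpa [Function.comp_def] using this
    have hq := hasDerivAt_pow 2 x
    norm_num at hq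
    have h3 := ((hq.const_mul (κ/δ)).add_const ((κ+δ*μ)/δ^2)).sub
      ((h1.add h2).const_mul (κ/δ))
    have h4 : HasDerivAt (fun y : ℝ => (κ/δ)*y^2 + (κ + δ*μ)/δ^2
        - (κ/δ)*((max (y - δ/(2*κ)) 0)^2 + (max (-y - δ/(2*κ)) 0)^2))
        ((2*κ/δ) * (x - max (x - δ/(2*κ)) 0 + max (-x - δ/(2*κ)) 0)) x := by
      refine h3.congr_deriv ?_
      ring
    exact h4.congr_of_eventuallyEq (Filter.Eventually.of_forall fun y => huv y)
  have hderiv : deriv u = fun x =>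
      (2*κ/δ) * (x - max (x - δ/(2*κ)) 0 + max (-x - δ/(2*κ)) 0) :=
    funext fun x => (hder x).deriv
  refine ⟨?_, ?_, ?_, ?_, ?_⟩
  · rw [contDiff_one_iff_deriv]
    refine ⟨fun x => (hder x).differentiableAt, ?_⟩
    rw [hderiv]
    exact (continuous_const.mul (((continuous_id.sub
      ((continuous_id.sub continuous_const).max continuous_const)).add
      ((continuous_id.neg.sub continuous_const).max continuous_const))))
  · intro x
    rw [hderiv]
    have habs : |x - max (x - δ/(2*κ)) 0 + max (-x - δ/(2*κ)) 0| ≤ δ/(2*κ) := by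
      rcases le_or_gt x (δ/(2*κ)) with h1 | h1
      · rw [max_eq_right (by linarith : x - δ/(2*κ) ≤ 0)]
        rcases le_or_gt (-(δ/(2*κ))) x with h2 | h2
        · rw [max_eq_right (by linarith : -x - δ/(2*κ) ≤ 0), abs_le]
          constructor <;> linarith
        · rw [max_eq_left (by linarith : (0:ℝ) ≤ -x - δ/(2*κ)), abs_le]
          constructor <;> linarith
      · rw [max_eq_left (by linarith : (0:ℝ) ≤ x - δ/(2*κ)),
          max_eq_right (by linarith : -x - δ/(2*κ) ≤ 0), abs_le]
        constructor <;> linarith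
    calc |(2*κ/δ) * (x - max (x - δ/(2*κ)) 0 + max (-x - δ/(2*κ)) 0)|
        = (2*κ/δ) * |x - max (x - δ/(2*κ)) 0 + max (-x - δ/(2*κ)) 0| := by
          rw [abs_mul, abs_of_pos (by positivity)]
      _ ≤ (2*κ/δ) * (δ/(2*κ)) := by gcongr
      _ = 1 := by field_simp
  · intro x hx
    obtain ⟨h1, h2⟩ := abs_lt.mp hx
    have hev : deriv u =ᶠ[nhds x] fun y => (2*κ/δ) * y := by
      rw [hderiv]
      filter_upwards [Iio_mem_nhds (show x < δ/(2*κ) from h2),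
        Ioi_mem_nhds (show -(δ/(2*κ)) < x from h1)] with y hy1 hy2
      have hy1' : y < δ/(2*κ) := hy1
      have hy2' : -(δ/(2*κ)) < y := hy2
      rw [max_eq_right (by linarith), max_eq_right (by linarith)]
      ring
    have hdd : deriv (deriv u) x = 2*κ/δ := by
      rw [hev.deriv_eq]
      have := ((hasDerivAt_id x).const_mul (2*κ/δ)).deriv
      simpa using this
    rw [hdd, hu x, if_pos hx.le]
    field_simp
    ring
  · intro x hx
    rw [hu x, if_pos hx]
    have h1 : |x| * (2*κ) ≤ δ := (le_div_iff₀ (by positivity)).mp hx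
    have hx2 : 4*κ^2*x^2 ≤ δ^2 := by
      nlinarith [sq_abs x, mul_nonneg (sub_nonneg.mpr h1)
        (by positivity : (0:ℝ) ≤ δ + |x| * (2*κ))]
    rw [← sub_nonneg]
    have hE : κ/δ * x^2 + (κ + δ*μ)/δ^2 - lam*x^2
        = (δ*(δ*lam - κ)*(δ^2 - 4*κ^2*x^2))/(4*κ^2*δ^2) := by
      field_simp
      linear_combination key
    rw [hE]
    apply div_nonneg _ (by positivity)
    apply mul_nonneg (by positivity) (by linarith)
  · intro x hx
    rcases eq_or_lt_of_le hx with heq | hlt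
    · rw [hu x, if_pos (le_of_eq heq.symm)]
      have hx2 : x^2 = δ^2/(4*κ^2) := by
        rw [← sq_abs, ← heq]
        field_simp
        ring
      rw [hx2]
      have heq2 : κ/δ * (δ^2/(4*κ^2)) + (κ + δ*μ)/δ^2 = lam * (δ^2/(4*κ^2)) := by
        field_simp
        linear_combination key
      exact le_of_eq heq2
    · rw [hu x, if_neg (not_le.mpr hlt)]
      have ht1 : 0 ≤ 2*κ*|x| - δ := by
        have := (div_lt_iff₀ (by positivity : (0:ℝ) < 2*κ)).mp hlt
        linarith
      have ht2 : 0 ≤ lam*(2*κ*|x| + δ) - 2*κ := by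
        nlinarith [mul_nonneg hlam.le ht1]
      have htt : x^2 = |x|^2 := (sq_abs x).symm
      rw [htt, ← sub_nonneg]
      generalize |x| = t at ht1 ht2 ⊢
      have hE : lam*t^2 - (t - δ/(2*κ) + lam*δ^2/(4*κ^2))
          = ((2*κ*t - δ)*(lam*(2*κ*t + δ) - 2*κ))/(4*κ^2) := by
        field_simp
        ring
      rw [hE]
      exact div_nonneg (mul_nonneg ht1 ht2) (by positivity)
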